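/- Let u be a subharmonic function on ℂ such that u − log⁺|·| is bounded above on ℂ and u ≤ 0 on the closed unit disc. Then u(ζ) ≤ log|ζ| for all ζ ∈ ℂ with |ζ| ≥ 1. -/

import Mathlib

open Complex Metric Set MeasureTheory Filter Topology

noncomputable section

/-- Plurisubharmonicity of `u` on `S`: upper semicontinuity on `S` together with the
sub-mean value inequality over every circle bounding a closed complex disc contained in `S`. -/
def PshOn {E : Type*} [NormedAddCommGroup E] [NormedSpace ℂ E]
    (u : E → ℝ) (S : Set E) : Prop :=
  UpperSemicontinuousOn u S ∧
    ∀ a ∈ S, ∀ b : E, ∀ r : ℝ, 0 < r →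
      (∀ w : ℂ, ‖w‖ ≤ r → a + w • b ∈ S) →
      u a ≤ (2 * Real.pi)⁻¹ *
        ∫ θ in (0:ℝ)..(2 * Real.pi), u (a + ((r : ℂ) * Complex.exp (θ * Complex.I)) • b)

/-- Plurisubharmonic on the whole space. -/
def Psh {E : Type*} [NormedAddCommGroup E] [NormedSpace ℂ E] (u : E → ℝ) : Prop :=
  PshOn u Set.univ

/-- Minimal growth (Lelong class): `u - log⁺‖·‖` is bounded above. -/
def MinGrowth {E : Type*} [NormedAddCommGroup E] (u : E → ℝ) : Prop :=
  ∃ C : ℝ, ∀ z : E, u z - max (Real.log ‖z‖) 0 ≤ C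

/-- The Siciak-Zahariuta extremal function of `X ⊆ ℂⁿ`. -/
def SZ {n : ℕ} (X : Set (EuclideanSpace ℂ (Fin n))) (z : EuclideanSpace ℂ (Fin n)) : EReal :=
  ⨆ u ∈ {u : EuclideanSpace ℂ (Fin n) → ℝ | Psh u ∧ MinGrowth u ∧ ∀ x ∈ X, u x ≤ 0},
    (u z : EReal)

private lemma meanvalue_circle (F : ℂ → ℂ) (hF : DifferentiableOn ℂ F (closedBall 0 1)) :
    ∫ θ in (0:ℝ)..(2*Real.pi), F (circleMap 0 1 θ) = 2 * Real.pi * F 0 := by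
  have h := hF.circleIntegral_sub_inv_smul (w := 0) (by simp : (0:ℂ) ∈ ball (0:ℂ) 1)
  rw [circleIntegral] at h
  simp only [sub_zero, smul_eq_mul, deriv_circleMap] at h
  have hcong : ∀ θ ∈ Set.uIcc (0:ℝ) (2*Real.pi),
      circleMap 0 1 θ * I * ((circleMap 0 1 θ)⁻¹ * F (circleMap 0 1 θ))
        = I * F (circleMap 0 1 θ) := by
    intro θ _
    have h0 : circleMap 0 1 θ ≠ 0 := fun hc => one_ne_zero (circleMap_eq_center_iff.mp hc)
    field_simp
  rw [intervalIntegral.integral_congr hcong, intervalIntegral.integral_const_mul] at h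
  have hI : (I : ℂ) ≠ 0 := I_ne_zero
  have : I * ∫ θ in (0:ℝ)..(2*Real.pi), F (circleMap 0 1 θ) = I * (2 * Real.pi * F 0) := by
    rw [h]; ring
  exact mul_left_cancel₀ hI this

private lemma integral_log_circle {a : ℂ} {r : ℝ} (hr : 0 < r) (hra : r < ‖a‖) :
    ∫ θ in (0:ℝ)..(2*Real.pi), Real.log (‖a + r * Complex.exp (θ * I)‖)
      = 2 * Real.pi * Real.log (‖a‖) := by
  have ha : a ≠ 0 := by
    intro h; rw [h] at hra; simp at hra; linarith
  set b : ℂ := (r : ℂ) / a with hb_def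
  have hb : ‖b‖ < 1 := by
    rw [hb_def, norm_div, Complex.norm_real, Real.norm_eq_abs, abs_of_pos hr]
    rw [div_lt_one (lt_trans hr hra)]
    exact hra
  have hmem : ∀ z : ℂ, ‖z‖ ≤ 1 → (1 + b * z) ∈ Complex.slitPlane := by
    intro z hz
    left
    have h1 : ‖b * z‖ < 1 := by
      rw [norm_mul]
      calc ‖b‖ * ‖z‖ ≤ ‖b‖ * 1 :=
            mul_le_mul_of_nonneg_left hz (norm_nonneg _)
        _ < 1 := by simpa using hb
    have h2 : |(b * z).re| ≤ ‖b * z‖ := Complex.abs_re_le_norm _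
    simp only [Complex.add_re, Complex.one_re]
    have := abs_le.mp h2
    linarith
  set F : ℂ → ℂ := fun z => Complex.log (1 + b * z) with hF_def
  have hFd : DifferentiableOn ℂ F (closedBall 0 1) := by
    intro z hz
    have hz1 : ‖z‖ ≤ 1 := by
      simpa [Complex.dist_eq] using (mem_closedBall.mp hz)
    have hinner : DifferentiableAt ℂ (fun w : ℂ => 1 + b * w) z := by fun_prop
    have hcomp := (Complex.differentiableAt_log (hmem z hz1)).comp z hinner
    exact (show DifferentiableAt ℂ F z from hcomp).differentiableWithinAt
  have hmv := meanvalue_circle F hFd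
  have hF0 : F 0 = 0 := by simp [hF_def]
  rw [hF0, mul_zero] at hmv
  -- continuity of θ ↦ F (circleMap 0 1 θ)
  have hcont : Continuous fun θ : ℝ => F (circleMap 0 1 θ) := by
    rw [continuous_iff_continuousAt]
    intro θ
    have h1 : ‖circleMap 0 1 θ‖ ≤ 1 := by
      simp [circleMap, norm_exp_ofReal_mul_I]
    have hinner : DifferentiableAt ℂ (fun w : ℂ => 1 + b * w) (circleMap 0 1 θ) := by fun_prop
    have hcomp := (Complex.differentiableAt_log (hmem _ h1)).comp (circleMap 0 1 θ) hinner
    have hFd : DifferentiableAt ℂ F (circleMap 0 1 θ) := by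
      exact hcomp
    exact hFd.continuousAt.comp (continuous_circleMap 0 1).continuousAt
  have hint : IntervalIntegrable (fun θ : ℝ => F (circleMap 0 1 θ)) volume 0 (2*Real.pi) :=
    hcont.intervalIntegrable _ _
  have hre : ∫ θ in (0:ℝ)..(2*Real.pi), (F (circleMap 0 1 θ)).re = 0 := by
    have := Complex.reCLM.intervalIntegral_comp_comm hint
    simp only [hmv] at this
    simpa using this
  -- pointwise identity
  have hpt : ∀ θ : ℝ, Real.log (‖a + r * Complex.exp (θ * I)‖)
      = Real.log (‖a‖) + (F (circleMap 0 1 θ)).re := by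
    intro θ
    have hcm : circleMap 0 1 θ = Complex.exp (θ * I) := by simp [circleMap]
    have hfac : a + r * Complex.exp (θ * I) = a * (1 + b * circleMap 0 1 θ) := by
      rw [hcm, hb_def]; field_simp
    have hne : (1 + b * circleMap 0 1 θ) ≠ 0 := by
      have h1 : ‖circleMap 0 1 θ‖ ≤ 1 := by
        simp [circleMap, norm_exp_ofReal_mul_I]
      exact Complex.slitPlane_ne_zero (hmem _ h1)
    rw [hfac, norm_mul, Real.log_mul (norm_ne_zero_iff.mpr ha) (norm_ne_zero_iff.mpr hne)]
    simp [hF_def, Complex.log_re]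
  rw [intervalIntegral.integral_congr (fun θ _ => hpt θ)]
  rw [intervalIntegral.integral_add (intervalIntegrable_const)
    (show IntervalIntegrable (fun θ : ℝ => (F (circleMap 0 1 θ)).re) volume 0 (2*Real.pi) from
      (Complex.continuous_re.comp hcont).intervalIntegrable 0 (2*Real.pi))]
  rw [hre, add_zero, intervalIntegral.integral_const]
  simp [mul_comm]

private lemma usc_exists_max {K : Set ℂ} (hK : IsCompact K) (hne : K.Nonempty)
    {w : ℂ → ℝ} (hw : UpperSemicontinuousOn w K) {C : ℝ} (hbd : ∀ z ∈ K, w z ≤ C) :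
    ∃ a ∈ K, ∀ z ∈ K, w z ≤ w a := by
  set M := sSup (w '' K) with hM
  have hbdd : BddAbove (w '' K) := ⟨C, by rintro - ⟨z, hz, rfl⟩; exact hbd z hz⟩
  have hne' : (w '' K).Nonempty := hne.image w
  have hseq : ∀ n : ℕ, ∃ z ∈ K, M - 1/(n+1) < w z := by
    intro n
    obtain ⟨y, ⟨z, hz, rfl⟩, hy⟩ := exists_lt_of_lt_csSup hne'
      (show M - 1/(n+1) < M by
        have : (0:ℝ) < 1/(n+1) := by positivity
        linarith)
    exact ⟨z, hz, hy⟩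
  choose z hzK hzlt using hseq
  obtain ⟨a, haK, φ, hφ, hlim⟩ := hK.tendsto_subseq hzK
  refine ⟨a, haK, fun x hx => ?_⟩
  have hle : w x ≤ M := le_csSup hbdd ⟨x, hx, rfl⟩
  suffices hMa : M ≤ w a by linarith
  by_contra hlt
  push_neg at hlt
  set y := (w a + M)/2 with hy
  have hy1 : w a < y := by rw [hy]; linarith
  have hy2 : y < M := by rw [hy]; linarith
  have hev : ∀ᶠ n in atTop, w (z (φ n)) < y := by
    have htd : Tendsto (fun n => z (φ n)) atTop (𝓝[K] a) :=
      tendsto_nhdsWithin_of_tendsto_nhds_of_eventually_within _ hlim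
        (Eventually.of_forall fun n => hzK (φ n))
    exact htd.eventually (hw a haK y hy1)
  have hev2 : ∀ᶠ n : ℕ in atTop, (1:ℝ)/(n+1) < M - y := by
    have h0 : Tendsto (fun n : ℕ => (1:ℝ)/(n+1)) atTop (𝓝 0) :=
      tendsto_one_div_add_atTop_nhds_zero_nat
    exact h0.eventually_lt_const (by linarith)
  obtain ⟨n, h1, h2⟩ := (hev.and hev2).exists
  have h3 : (1:ℝ)/(φ n + 1) ≤ 1/(n+1) := by
    apply one_div_le_one_div_of_le (by positivity)
    have h := hφ.le_apply (x := n)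
    have : (n:ℝ) ≤ (φ n : ℝ) := Nat.cast_le.mpr h
    linarith
  have h4 := hzlt (φ n)
  linarith

/-- A subharmonic function on `ℂ` of minimal growth which is `≤ 0` on the closed unit disc
satisfies `u ζ ≤ log |ζ|` for `|ζ| ≥ 1`. -/
theorem subharmonic_minimal_growth_bound (u : ℂ → ℝ)
    (hu : PshOn u Set.univ) (hgrowth : MinGrowth u)
    (hbd : ∀ ζ ∈ closedBall (0:ℂ) 1, u ζ ≤ 0) :
    ∀ ζ : ℂ, 1 ≤ ‖ζ‖ → u ζ ≤ Real.log ‖ζ‖ := by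
  obtain ⟨C, hC⟩ := hgrowth
  have hC' : ∀ z : ℂ, u z ≤ max (Real.log (‖z‖)) 0 + C := by
    intro z; have := hC z; linarith
  have husc : UpperSemicontinuous u := upperSemicontinuousOn_univ_iff.mp hu.1
  have hmean : ∀ a : ℂ, ∀ r : ℝ, 0 < r →
      u a ≤ (2*Real.pi)⁻¹ * ∫ θ in (0:ℝ)..(2*Real.pi), u (a + r * Complex.exp (θ*I)) := by
    intro a r hr
    have h := hu.2 a (Set.mem_univ a) 1 r hr (fun w _ => Set.mem_univ _)
    simpa [smul_eq_mul] using h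
  have habs_lb : ∀ a x : ℂ, ‖a‖ - ‖x‖ ≤ ‖a + x‖ := by
    intro a x
    have h := abs_norm_sub_norm_le (a + x) a
    simp only [add_sub_cancel_left] at h
    have := abs_le.mp h
    linarith [this.1]
  have habs_circ : ∀ r : ℝ, 0 < r → ∀ θ : ℝ,
      ‖(r:ℂ) * Complex.exp (θ*I)‖ = r := by
    intro r hr θ
    rw [norm_mul, Complex.norm_real, Real.norm_eq_abs, Complex.norm_exp_ofReal_mul_I, mul_one, abs_of_pos hr]
  -- Main quantitative claim
  have key : ∀ ε : ℝ, 0 < ε → ∀ ζ : ℂ, 1 ≤ ‖ζ‖ →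
      u ζ ≤ (1+ε) * Real.log (‖ζ‖) := by
    intro ε hε ζ hζ
    rcases eq_or_lt_of_le hζ with h1 | h1
    · have h0 : ‖ζ‖ = 1 := h1.symm
      rw [h0, Real.log_one, mul_zero]
      exact hbd ζ (by simp [mem_closedBall, Complex.dist_eq, h0])
    set c : ℝ := 1 + ε with hc_def
    have hc1 : 1 ≤ c := by rw [hc_def]; linarith
    have hcpos : 0 < c := by linarith
    set R : ℝ := max (‖ζ‖ + 1) (Real.exp (C/ε)) with hR_def
    have hRζ : ‖ζ‖ < R := lt_of_lt_of_le (by linarith) (le_max_left _ _)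
    have hR1 : 1 < R := lt_trans h1 hRζ
    have hlogR0 : 0 ≤ Real.log R := Real.log_nonneg hR1.le
    have hRlog : C ≤ ε * Real.log R := by
      have h2 : Real.exp (C/ε) ≤ R := le_max_right _ _
      have h3 : C/ε ≤ Real.log R := by
        rw [← Real.log_exp (C/ε)]
        exact Real.log_le_log (Real.exp_pos _) h2
      have h4 := mul_le_mul_of_nonneg_left h3 hε.le
      calc C = ε * (C/ε) := by field_simp
        _ ≤ ε * Real.log R := h4
    set w : ℂ → ℝ := fun z => u z - c * Real.log (‖z‖) with hw_def
    set Kb : Set ℂ := closedBall (0:ℂ) R \ ball 0 1 with hKb_def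
    have hmemKb : ∀ z : ℂ, z ∈ Kb ↔ 1 ≤ ‖z‖ ∧ ‖z‖ ≤ R := by
      intro z
      simp only [hKb_def, mem_diff, mem_closedBall, mem_ball, Complex.dist_eq, sub_zero, not_lt]
      tauto
  -- boundary estimates
    have hb1 : ∀ z : ℂ, ‖z‖ = 1 → w z ≤ 0 := by
      intro z hz
      have h2 : u z ≤ 0 := hbd z (by simp [mem_closedBall, Complex.dist_eq, hz])
      simp only [hw_def, hz, Real.log_one, mul_zero, sub_zero]
      exact h2
    have hbR : ∀ z : ℂ, ‖z‖ = R → w z ≤ 0 := by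
      intro z hz
      have h2 := hC' z
      rw [hz, max_eq_left hlogR0] at h2
      simp only [hw_def, hz, hc_def]
      nlinarith
    have hub : ∀ z ∈ Kb, w z ≤ Real.log R + C := by
      intro z hz
      obtain ⟨hz1, hz2⟩ := (hmemKb z).mp hz
      have h2 := hC' z
      have hlz : 0 ≤ Real.log (‖z‖) := Real.log_nonneg hz1
      have hlzR : Real.log (‖z‖) ≤ Real.log R := Real.log_le_log (by linarith) hz2
      rw [max_eq_left hlz] at h2
      simp only [hw_def]
      nlinarith
    have hwusc : ∀ z : ℂ, z ≠ 0 → UpperSemicontinuousAt w z := by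
      intro z hz
      have h1 : UpperSemicontinuousAt u z := husc z
      have h2 : ContinuousAt (fun y : ℂ => -(c * Real.log (‖y‖))) z := by
        apply ContinuousAt.neg
        apply ContinuousAt.mul continuousAt_const
        exact (Real.continuousAt_log (norm_ne_zero_iff.mpr hz)).comp
          continuous_norm.continuousAt
      have h3 := h1.add h2.upperSemicontinuousAt
      simpa [hw_def, sub_eq_add_neg] using h3
    have hne0 : ∀ z ∈ Kb, z ≠ 0 := by
      intro z hz h0
      have := ((hmemKb z).mp hz).1
      rw [h0] at this; simp at this; linarith
    have hKc : IsCompact Kb := (isCompact_closedBall (0:ℂ) R).diff isOpen_ball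
    have hζK : ζ ∈ Kb := (hmemKb ζ).mpr ⟨hζ, hRζ.le⟩
    obtain ⟨a0, ha0, hmax⟩ := usc_exists_max hKc ⟨ζ, hζK⟩
      (fun z hz => (hwusc z (hne0 z hz)).upperSemicontinuousWithinAt Kb)
      hub
    set M : ℝ := w a0 with hM_def
    have hwKle : ∀ z ∈ Kb, w z ≤ M := hmax
    have hM0 : M ≤ 0 := by
      by_contra hMc
      push_neg at hMc
      -- a0 is interior
      obtain ⟨ha01, ha0R⟩ := (hmemKb a0).mp ha0
      have ha01' : 1 < ‖a0‖ := by
        rcases eq_or_lt_of_le ha01 with h | h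
        · exact absurd (hb1 a0 h.symm) (by linarith)
        · exact h
      have ha0R' : ‖a0‖ < R := by
        rcases eq_or_lt_of_le ha0R with h | h
        · exact absurd (hbR a0 h) (by linarith)
        · exact h
      -- sub-mean value dichotomy for w
      have hsub : ∀ a : ℂ, 1 ≤ ‖a‖ → ∀ r : ℝ, 0 < r → r < ‖a‖ →
          w a ≤ 0 ∨ (IntervalIntegrable (fun θ => w (a + r * Complex.exp (θ*I))) volume 0 (2*Real.pi)
            ∧ w a ≤ (2*Real.pi)⁻¹ * ∫ θ in (0:ℝ)..(2*Real.pi), w (a + r * Complex.exp (θ*I))) := by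
        intro a ha r hr hra
        have hne : ∀ θ : ℝ, ‖a + r * Complex.exp (θ*I)‖ ≠ 0 := by
          intro θ
          have h2 := habs_lb a ((r:ℂ) * Complex.exp (θ*I))
          rw [habs_circ r hr θ] at h2
          have : 0 < ‖a + r * Complex.exp (θ*I)‖ := by linarith
          linarith
        have hlog_cont : Continuous fun θ : ℝ => Real.log (‖a + r * Complex.exp (θ*I)‖) := by
          rw [continuous_iff_continuousAt]
          intro θ
          have hin : Continuous fun θ : ℝ => a + (r:ℂ) * Complex.exp (θ*I) := by
            apply continuous_const.add
            apply continuous_const.mul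
            exact Complex.continuous_exp.comp (Complex.continuous_ofReal.mul continuous_const)
          have habc : Continuous fun θ : ℝ => ‖a + (r:ℂ) * Complex.exp (θ*I)‖ :=
            continuous_norm.comp hin
          have hcomp : ContinuousAt (Real.log ∘ fun θ : ℝ =>
              ‖a + (r:ℂ) * Complex.exp (θ*I)‖) θ :=
            ContinuousAt.comp (Real.continuousAt_log (hne θ)) habc.continuousAt
          exact hcomp
        by_cases hi : IntervalIntegrable (fun θ => u (a + r * Complex.exp (θ*I))) volume 0 (2*Real.pi)
        · right
          have hil : IntervalIntegrable
              (fun θ => c * Real.log (‖a + r * Complex.exp (θ*I)‖)) volume 0 (2*Real.pi) :=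
            (continuous_const.mul hlog_cont).intervalIntegrable _ _
          refine ⟨hi.sub hil, ?_⟩
          have hsplit : ∫ θ in (0:ℝ)..(2*Real.pi), w (a + r * Complex.exp (θ*I))
              = (∫ θ in (0:ℝ)..(2*Real.pi), u (a + r * Complex.exp (θ*I)))
                - c * (2*Real.pi*Real.log (‖a‖)) := by
            have : (fun θ : ℝ => w (a + r * Complex.exp (θ*I)))
                = fun θ : ℝ => u (a + r*Complex.exp (θ*I))
                  - c * Real.log (‖a + r*Complex.exp (θ*I)‖) := rfl
            rw [this, intervalIntegral.integral_sub hi hil,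
              intervalIntegral.integral_const_mul, integral_log_circle hr hra]
          have hm := hmean a r hr
          rw [hsplit]
          have hπ : (0:ℝ) < 2*Real.pi := by positivity
          have heq : (2*Real.pi)⁻¹ * ((∫ θ in (0:ℝ)..(2*Real.pi), u (a + r * Complex.exp (θ*I)))
                - c * (2*Real.pi*Real.log (‖a‖)))
              = (2*Real.pi)⁻¹ * (∫ θ in (0:ℝ)..(2*Real.pi), u (a + r * Complex.exp (θ*I)))
                - c * Real.log (‖a‖) := by
            generalize (∫ θ in (0:ℝ)..(2*Real.pi), u (a + r * Complex.exp (θ*I))) = X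
            field_simp
          rw [heq]
          simp only [hw_def]
          linarith
        · left
          have h0 : ∫ θ in (0:ℝ)..(2*Real.pi), u (a + r*Complex.exp (θ*I)) = 0 :=
            intervalIntegral.integral_undef hi
          have hm := hmean a r hr
          rw [h0, mul_zero] at hm
          have h2 : 0 ≤ c * Real.log (‖a‖) :=
            mul_nonneg hcpos.le (Real.log_nonneg ha)
          simp only [hw_def]
          linarith
      -- propagation to spheres
      have hprop : ∀ a : ℂ, 1 < ‖a‖ → ‖a‖ < R → w a = M →
          ∀ r : ℝ, 0 < r → r < min (‖a‖ - 1) (R - ‖a‖) →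
          ∀ z : ℂ, ‖z - a‖ = r → w z = M := by
        intro a ha1 haR haM r hr hrm z hz
        have hr1 : r < ‖a‖ - 1 := lt_of_lt_of_le hrm (min_le_left _ _)
        have hr2 : r < R - ‖a‖ := lt_of_lt_of_le hrm (min_le_right _ _)
        have hcircK : ∀ θ : ℝ, (a + r * Complex.exp (θ*I)) ∈ Kb := by
          intro θ
          have hlb := habs_lb a ((r:ℂ) * Complex.exp (θ*I))
          have hub2 := norm_add_le a ((r:ℂ) * Complex.exp (θ*I))
          rw [habs_circ r hr θ] at hlb hub2
          exact (hmemKb _).mpr ⟨by linarith, by linarith⟩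
        rcases hsub a (by linarith) r hr (by linarith) with h | ⟨hint, hineq⟩
        · linarith [haM ▸ h]
        · have hle : ∀ θ : ℝ, w (a + r*Complex.exp (θ*I)) ≤ M := fun θ => hwKle _ (hcircK θ)
          have hπ : (0:ℝ) < 2*Real.pi := by positivity
          have hup : (∫ θ in (0:ℝ)..(2*Real.pi), w (a + r*Complex.exp (θ*I)))
              ≤ ∫ _ in (0:ℝ)..(2*Real.pi), M :=
            intervalIntegral.integral_mono_on (by linarith) hint intervalIntegrable_const
              (fun x _ => hle x)
          rw [intervalIntegral.integral_const, smul_eq_mul, sub_zero] at hup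
          have hlow : M ≤ (2*Real.pi)⁻¹ * ∫ θ in (0:ℝ)..(2*Real.pi), w (a + r*Complex.exp (θ*I)) := by
            rw [← haM]; exact hineq
          have hEq : (∫ θ in (0:ℝ)..(2*Real.pi), w (a + r*Complex.exp (θ*I))) = 2*Real.pi*M := by
            have h3 : 2*Real.pi*M ≤ ∫ θ in (0:ℝ)..(2*Real.pi), w (a + r*Complex.exp (θ*I)) := by
              have := mul_le_mul_of_nonneg_left hlow hπ.le
              rw [mul_inv_cancel_left₀ (ne_of_gt hπ)] at this
              linarith
            linarith
          -- integral of nonneg M - w is zero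
          set g : ℝ → ℝ := fun θ => M - w (a + r*Complex.exp (θ*I)) with hg_def
          have hgint : IntervalIntegrable g volume 0 (2*Real.pi) :=
            intervalIntegrable_const.sub hint
          have hgzero : ∫ θ in (0:ℝ)..(2*Real.pi), g θ = 0 := by
            rw [hg_def]
            rw [intervalIntegral.integral_sub intervalIntegrable_const hint,
              intervalIntegral.integral_const, smul_eq_mul, sub_zero, hEq]
            ring
          have hgae : g =ᵐ[volume.restrict (Ioc (0:ℝ) (2*Real.pi))] 0 :=
            (intervalIntegral.integral_eq_zero_iff_of_le_of_nonneg_ae (by linarith)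
              (ae_of_all _ fun θ => sub_nonneg.mpr (hle θ)) hgint).mp hgzero
          have hgae' : ∀ᵐ θ ∂(volume : Measure ℝ), θ ∈ Ioc (0:ℝ) (2*Real.pi) → g θ = 0 :=
            (ae_restrict_iff' measurableSet_Ioc).mp hgae
          have hnull : (volume : Measure ℝ) {θ | ¬ (θ ∈ Ioc (0:ℝ) (2*Real.pi) → g θ = 0)} = 0 :=
            ae_iff.mp hgae'
          -- now show w z = M
          have hzK : z ∈ Kb := by
            have : z = a + (z - a) := by ring
            rw [this]
            have hlb := habs_lb a (z - a)
            have hub2 := norm_add_le a (z - a)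
            rw [hz] at hlb hub2
            exact (hmemKb _).mpr ⟨by linarith, by linarith⟩
          have hzle : w z ≤ M := hwKle z hzK
          by_contra hznoteq
          have hzlt : w z < M := lt_of_le_of_ne hzle hznoteq
          have hz0 : z ≠ 0 := hne0 z hzK
          have hev : ∀ᶠ y in 𝓝 z, w y < M := hwusc z hz0 M hzlt
          -- find θ0
          have hzs : z ∈ sphere a |r| := by
            rw [mem_sphere, Complex.dist_eq, hz, abs_of_pos hr]
          obtain ⟨θ0, hθ0mem, hθ0⟩ : ∃ θ0 ∈ Ioc (0:ℝ) (2*Real.pi), circleMap a r θ0 = z := by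
            have := image_circleMap_Ioc a r
            rw [← this] at hzs
            exact hzs
          have hevθ : ∀ᶠ θ in 𝓝 θ0, w (circleMap a r θ) < M := by
            have ht : Tendsto (circleMap a r) (𝓝 θ0) (𝓝 z) := by
              rw [← hθ0]
              exact (continuous_circleMap a r).continuousAt
            exact ht.eventually hev
          obtain ⟨δ, hδ, hδp⟩ := Metric.eventually_nhds_iff.mp hevθ
          obtain ⟨hθ0pos, hθ0le⟩ := hθ0mem
          set t1 : ℝ := max (θ0 - δ/2) (θ0/2) with ht1_def
          have ht1lt : t1 < θ0 := by
            apply max_lt <;> linarith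
          have hsubset : Ioc t1 θ0 ⊆ {θ | ¬ (θ ∈ Ioc (0:ℝ) (2*Real.pi) → g θ = 0)} := by
            intro θ hθ
            obtain ⟨hθ1, hθ2⟩ := hθ
            have hθpos : 0 < θ := lt_of_le_of_lt (le_max_right _ _ : θ0/2 ≤ t1) hθ1 |>.trans_le' (by linarith)
            have hθIoc : θ ∈ Ioc (0:ℝ) (2*Real.pi) := ⟨by linarith [lt_of_le_of_lt (le_max_right (θ0 - δ/2) (θ0/2)) hθ1], by linarith⟩
            have hdist : dist θ θ0 < δ := by
              rw [Real.dist_eq, abs_of_nonpos (by linarith)]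
              have := le_max_left (θ0 - δ/2) (θ0/2)
              linarith [lt_of_le_of_lt this hθ1]
            have hwθ : w (circleMap a r θ) < M := hδp hdist
            have hgθ : g θ ≠ 0 := by
              have : circleMap a r θ = a + r * Complex.exp (θ*I) := rfl
              rw [this] at hwθ
              rw [hg_def]
              simp only
              intro hcon
              have : w (a + r * Complex.exp (θ*I)) = M := by linarith
              linarith
            intro hcon
            exact hgθ (hcon hθIoc)
          have hmes := measure_mono_null hsubset hnull
          rw [Real.volume_Ioc] at hmes
          have : (0:ℝ) < θ0 - t1 := by linarith
          exact absurd hmes (ne_of_gt (ENNReal.ofReal_pos.mpr this))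
      -- connectedness of open annulus
      set Aop : Set ℂ := {z : ℂ | 1 < ‖z‖ ∧ ‖z‖ < R} with hAop_def
      have hAopKb : Aop ⊆ Kb := fun z hz => (hmemKb z).mpr ⟨hz.1.le, hz.2.le⟩
      have hAconn : IsPreconnected Aop := by
        have h1 : IsPreconnected ((Ioo (1:ℝ) R) ×ˢ (univ : Set ℝ)) :=
          isPreconnected_Ioo.prod isPreconnected_univ
        have h2 : Continuous fun p : ℝ × ℝ => (p.1 : ℂ) * Complex.exp (p.2 * I) := by
          apply Continuous.mul
          · exact Complex.continuous_ofReal.comp continuous_fst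
          · exact Complex.continuous_exp.comp
              ((Complex.continuous_ofReal.comp continuous_snd).mul continuous_const)
        have h3 : (fun p : ℝ × ℝ => (p.1:ℂ) * Complex.exp (p.2 * I)) '' ((Ioo (1:ℝ) R) ×ˢ univ) = Aop := by
          ext z
          constructor
          · rintro ⟨⟨t, θ⟩, ⟨⟨ht1, ht2⟩, -⟩, rfl⟩
            have ht1' : (1:ℝ) < t := ht1
            have ht2' : t < R := ht2
            have habs : ‖(fun p : ℝ × ℝ => (p.1:ℂ) * Complex.exp (p.2 * I)) (t, θ)‖ = t :=
              habs_circ t (by linarith) θ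
            exact ⟨by rw [habs]; exact ht1', by rw [habs]; exact ht2'⟩
          · rintro ⟨hz1, hz2⟩
            exact ⟨(‖z‖, Complex.arg z), ⟨⟨hz1, hz2⟩, trivial⟩,
              Complex.norm_mul_exp_arg_mul_I z⟩
        rw [← h3]
        exact h1.image _ h2.continuousOn
      -- open sets U and V
      set U : Set ℂ := interior {z : ℂ | w z < M} with hU_def
      set V : Set ℂ := ⋃ (a : ℂ) (_ : a ∈ Aop ∧ w a = M),
        ball a (min (‖a‖ - 1) (R - ‖a‖)) with hV_def
      have hUopen : IsOpen U := isOpen_interior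
      have hVopen : IsOpen V := isOpen_iUnion fun a => isOpen_iUnion fun _ => isOpen_ball
      have hVsub : V ⊆ {z | w z = M} := by
        intro z hz
        simp only [hV_def, mem_iUnion] at hz
        obtain ⟨a, ⟨⟨ha1, haR⟩, haM⟩, hzball⟩ := hz
        have hd : ‖z - a‖ < min (‖a‖ - 1) (R - ‖a‖) := by
          rw [← Complex.dist_eq]; exact mem_ball.mp hzball
        rcases eq_or_ne z a with rfl | hza
        · exact haM
        · exact hprop a ha1 haR haM (‖z - a‖)
            (norm_pos_iff.mpr (sub_ne_zero.mpr hza)) hd z rfl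
      have hUV : Aop ⊆ U ∪ V := by
        intro z hz
        have hzK : z ∈ Kb := hAopKb hz
        have hzle : w z ≤ M := hwKle z hzK
        rcases eq_or_lt_of_le hzle with heq | hlt
        · right
          simp only [hV_def, mem_iUnion]
          refine ⟨z, ⟨hz, heq⟩, mem_ball_self ?_⟩
          exact lt_min (by linarith [hz.1]) (by linarith [hz.2])
        · left
          apply mem_interior_iff_mem_nhds.mpr
          have hev : ∀ᶠ y in 𝓝 z, w y < M := hwusc z (hne0 z hzK) M hlt
          exact hev
      have hVne : (Aop ∩ V).Nonempty := by
        have ha0A : a0 ∈ Aop := ⟨ha01', ha0R'⟩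
        refine ⟨a0, ha0A, ?_⟩
        simp only [hV_def, mem_iUnion]
        refine ⟨a0, ⟨ha0A, rfl⟩, mem_ball_self ?_⟩
        exact lt_min (by linarith) (by linarith)
      have hallM : ∀ z ∈ Aop, w z = M := by
        intro z hz
        rcases hUV hz with hU | hV
        · exfalso
          obtain ⟨x, hx⟩ := hAconn U V hUopen hVopen hUV ⟨z, hz, hU⟩ hVne
          have hx1 : w x < M := by
            have hxu : x ∈ U := hx.2.1
            rw [hU_def] at hxu
            have hx1' : x ∈ {z : ℂ | w z < M} := interior_subset hxu
            exact hx1'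
          have hx2 : w x = M := hVsub hx.2.2
          linarith
        · exact hVsub hV
      -- boundary contradiction
      have hw1 : w 1 ≤ 0 := hb1 1 (by simp)
      have hev1 : ∀ᶠ y in 𝓝 (1:ℂ), w y < M := hwusc 1 one_ne_zero M (by linarith)
      have htend : Tendsto (fun t : ℝ => (t:ℂ)) (𝓝[>] (1:ℝ)) (𝓝 (1:ℂ)) := by
        have h1 : Tendsto (fun t : ℝ => (t:ℂ)) (𝓝 (1:ℝ)) (𝓝 ((1:ℝ):ℂ)) :=
          Complex.continuous_ofReal.tendsto 1
        rw [Complex.ofReal_one] at h1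
        exact h1.mono_left nhdsWithin_le_nhds
      have hev2 : ∀ᶠ t : ℝ in 𝓝[>] (1:ℝ), w ((t:ℝ):ℂ) < M := htend.eventually hev1
      have hev3 : Ioo (1:ℝ) R ∈ 𝓝[>] (1:ℝ) := Ioo_mem_nhdsGT_of_mem ⟨le_refl 1, hR1⟩
      obtain ⟨t, hwt, ht⟩ := (hev2.and hev3).exists
      have htA : (t:ℂ) ∈ Aop := by
        constructor <;>
          rw [Complex.norm_real, Real.norm_eq_abs, abs_of_pos (by linarith [ht.1] : (0:ℝ) < t)]
        · exact ht.1
        · exact ht.2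
      have := hallM _ htA
      linarith
    -- conclude from M ≤ 0
    have hwζ : w ζ ≤ M := hwKle ζ hζK
    have hwζ0 : w ζ ≤ 0 := le_trans hwζ hM0
    have hfin : u ζ - c * Real.log (‖ζ‖) ≤ 0 := hwζ0
    linarith
  -- from key to the final bound
  intro ζ hζ
  have hlog0 : 0 ≤ Real.log (‖ζ‖) := Real.log_nonneg hζ
  rcases eq_or_lt_of_le hlog0 with h | h
  · have h2 := key 1 one_pos ζ hζ
    rw [← h] at h2 ⊢
    simpa using h2
  · have hstep : ∀ δ : ℝ, 0 < δ → u ζ ≤ Real.log (‖ζ‖) + δ := by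
      intro δ hδ
      have h2 := key (δ / Real.log (‖ζ‖)) (by positivity) ζ hζ
      have hmul : (1 + δ / Real.log (‖ζ‖)) * Real.log (‖ζ‖)
          = Real.log (‖ζ‖) + δ := by
        field_simp
      linarith [hmul ▸ h2]
    exact _root_.le_of_forall_pos_le_add hstep
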